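/- Let V = ⊕_{k=1}^r V_{d_k} be a representation of SL(2,ℂ) with all d_k ≥ 1, and assume V is not isomorphic to V₁, 2V₁, or V₂. Then lim_{b_Θ → a_Θ} Σ_{(K,I)∈Λ} 2 b_{K,I}^{D−3} / ∏_{(k,i)∈Θ∖{(K,I)}} (b_{K,I} − b_{k,i}) = 0, where the limit is taken over real tuples b_Θ = (b_{k,i} : (k,i)∈Θ) with pairwise distinct entries tending to a_Θ = (a_{k,i} : (k,i)∈Θ). -/

import Mathlib

open scoped BigOperators

open Finset Metric Filter Complex Polynomial intervalIntegral
open scoped Real BigOperators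
set_option linter.unusedSectionVars false
noncomputable section SL2AuxSection
namespace SL2Aux
variable {ι : Type*} [Fintype ι] [DecidableEq ι]

theorem lagrange_poly {F : Type*} [Field F] (v : ι → F) (hv : Function.Injective v) (m : ℕ)
    (hm : m + 1 ≤ Fintype.card ι) :
    (X : F[X]) ^ m = ∑ p : ι, C (v p ^ m / ∏ q ∈ univ.erase p, (v p - v q)) *
      ∏ q ∈ univ.erase p, (X - C (v q)) := by
  have hdeg : ((X : F[X]) ^ m).degree < (univ : Finset ι).card := by
    rw [degree_X_pow, Finset.card_univ]
    exact_mod_cast Nat.lt_of_succ_le hm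
  have h := Lagrange.eq_interpolate (f := (X : F[X]) ^ m) (hv.injOn) hdeg
  rw [Lagrange.interpolate_apply] at h
  calc (X : F[X]) ^ m = _ := h
    _ = _ := by
      refine Finset.sum_congr rfl fun p _ => ?_
      rw [Lagrange.basis]
      simp only [Lagrange.basisDivisor, eval_pow, eval_X]
      rw [Finset.prod_mul_distrib, ← map_prod, ← mul_assoc, ← map_mul,
        Finset.prod_inv_distrib, div_eq_mul_inv]

theorem sum_div_prod_eq_zero {F : Type*} [Field F] (v : ι → F) (hv : Function.Injective v)
    (m : ℕ) (hm : m + 2 ≤ Fintype.card ι) :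
    ∑ p : ι, v p ^ m / ∏ q ∈ univ.erase p, (v p - v q) = 0 := by
  have h := lagrange_poly v hv m (le_trans (by omega) hm)
  have h2 := congrArg (fun f : F[X] => f.coeff (Fintype.card ι - 1)) h
  rw [coeff_X_pow, if_neg (by omega), Polynomial.finset_sum_coeff] at h2
  rw [eq_comm, h2]
  refine Finset.sum_congr rfl fun p _ => ?_
  rw [eq_comm]
  have hmonic : (∏ q ∈ univ.erase p, ((X : F[X]) - C (v q))).Monic :=
    monic_prod_of_monic _ _ fun q _ => monic_X_sub_C _
  have hdeg : (∏ q ∈ univ.erase p, ((X : F[X]) - C (v q))).natDegree = Fintype.card ι - 1 := by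
    rw [natDegree_prod_of_monic _ _ fun q _ => monic_X_sub_C _]
    simp [Finset.card_erase_of_mem, Finset.card_univ]
  rw [coeff_C_mul, ← hdeg, hmonic.coeff_natDegree, mul_one]

theorem pf_decomp (v : ι → ℂ) (hv : Function.Injective v) (m : ℕ)
    (hm : m + 1 ≤ Fintype.card ι) {z : ℂ} (hz : ∀ p, z ≠ v p) :
    z ^ m / ∏ q, (z - v q) = ∑ p, (v p ^ m / ∏ q ∈ univ.erase p, (v p - v q)) * (z - v p)⁻¹ := by
  have h := congrArg (Polynomial.eval z) (lagrange_poly v hv m hm)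
  simp only [eval_pow, eval_X, eval_finset_sum, eval_mul, eval_C, eval_prod, eval_sub] at h
  rw [div_eq_iff (Finset.prod_ne_zero_iff.2 fun q _ => sub_ne_zero.2 (hz q)), h,
    Finset.sum_mul]
  refine Finset.sum_congr rfl fun p _ => ?_
  rw [← Finset.mul_prod_erase _ _ (Finset.mem_univ p), mul_assoc,
    ← mul_assoc ((z - v p)⁻¹), inv_mul_cancel₀ (sub_ne_zero.2 (hz p)), one_mul]

theorem integral_sub_inv_of_not_mem_closedBall {c w : ℂ} {R : ℝ} (hR : 0 ≤ R)
    (hw : w ∉ closedBall c R) : (∮ z in C(c, R), (z - w)⁻¹) = 0 := by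
  refine circleIntegral_eq_zero_of_differentiable_on_off_countable hR Set.countable_empty
    ?_ fun z hz => ?_
  · intro z hz
    exact ((continuousAt_id.sub continuousAt_const).inv₀
      (sub_ne_zero.2 (show z ≠ w from fun h => hw (h ▸ hz)))).continuousWithinAt
  · exact (differentiableAt_id.sub_const w).inv
      (sub_ne_zero.2 (show z ≠ w from fun h => hw (h ▸ ball_subset_closedBall hz.1)))

theorem circleIntegral_finset_sum {s : Finset ι} {f : ι → ℂ → ℂ} {c : ℂ} {R : ℝ} (hR : 0 ≤ R)
    (h : ∀ p ∈ s, ContinuousOn (f p) (sphere c R)) :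
    (∮ z in C(c, R), ∑ p ∈ s, f p z) = ∑ p ∈ s, ∮ z in C(c, R), f p z := by
  simp only [circleIntegral, smul_sum]
  rw [intervalIntegral.integral_finset_sum]
  intro p hp
  have : Continuous fun θ : ℝ => deriv (circleMap c R) θ • f p (circleMap c R θ) := by
    simp only [deriv_circleMap]
    exact ((continuous_circleMap 0 R).mul continuous_const).smul
      ((h p hp).comp_continuous (continuous_circleMap c R) (circleMap_mem_sphere c hR))
  exact this.intervalIntegrable _ _

open scoped Classical in
theorem circleIntegral_ratfun (v : ι → ℂ) (hv : Function.Injective v) (m : ℕ)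
    (hm : m + 1 ≤ Fintype.card ι) (c : ℂ) {R : ℝ} (hR : 0 < R)
    (hoff : ∀ p, v p ∉ sphere c R) :
    (∮ z in C(c, R), z ^ m / ∏ q, (z - v q)) =
      (2 * ↑π * I) * ∑ p ∈ univ.filter (fun p => v p ∈ ball c R),
        v p ^ m / ∏ q ∈ univ.erase p, (v p - v q) := by
  have hz : ∀ z ∈ sphere c R, ∀ p, z ≠ v p := fun z hzs p h => hoff p (h ▸ hzs)
  rw [circleIntegral.integral_congr hR.le
    (g := fun z => ∑ p, (v p ^ m / ∏ q ∈ univ.erase p, (v p - v q)) * (z - v p)⁻¹)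
    (fun z hzs => pf_decomp v hv m hm (hz z hzs))]
  rw [circleIntegral_finset_sum hR.le
    (f := fun p z => (v p ^ m / ∏ q ∈ univ.erase p, (v p - v q)) * (z - v p)⁻¹)
    (fun p _ => (continuousOn_const.mul
    (((continuous_id.sub continuous_const).continuousOn).inv₀
      (fun z hzs => sub_ne_zero.2 (hz z hzs p)))))]
  simp only [circleIntegral.integral_const_mul]
  rw [Finset.sum_filter, Finset.mul_sum]
  refine Finset.sum_congr rfl fun p _ => ?_
  by_cases hp : v p ∈ ball c R
  · rw [if_pos hp, circleIntegral.integral_sub_inv_of_mem_ball hp]; ring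
  · have hcb : v p ∉ closedBall c R := fun hcb => hp (mem_ball.mpr
      (lt_of_le_of_ne (mem_closedBall.mp hcb) (fun h => hoff p (mem_sphere.mpr h))))
    rw [if_neg hp, integral_sub_inv_of_not_mem_closedBall hR.le hcb, mul_zero, mul_zero]

theorem sphere_lb {a : ι → ℝ} {c R : ℝ} (hR : 0 < R)
    (hsep : ∀ p, |a p - c| + 2⁻¹ ≤ R ∨ R + 2⁻¹ ≤ |a p - c|) (θ : ℝ) (q : ι) :
    2⁻¹ ≤ ‖circleMap (c : ℂ) R θ - (a q : ℂ)‖ := by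
  have h1 : ‖circleMap (c : ℂ) R θ - (c : ℂ)‖ = R := by
    rw [circleMap_sub_center, norm_circleMap_zero, abs_of_pos hR]
  have h2 : ‖((a q : ℂ)) - (c : ℂ)‖ = |a q - c| := by
    rw [← ofReal_sub, Complex.norm_real, Real.norm_eq_abs]
  have h3 : |‖circleMap (c : ℂ) R θ - (c : ℂ)‖ - ‖((a q : ℂ)) - (c : ℂ)‖|
      ≤ ‖circleMap (c : ℂ) R θ - (a q : ℂ)‖ := by
    have h := abs_norm_sub_norm_le (circleMap (c : ℂ) R θ - (c : ℂ)) (((a q : ℂ)) - (c : ℂ))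
    have heq : (circleMap (c : ℂ) R θ - (c : ℂ)) - (((a q : ℂ)) - (c : ℂ))
        = circleMap (c : ℂ) R θ - (a q : ℂ) := by ring
    rwa [heq] at h
  rw [h1, h2] at h3
  rcases hsep q with h | h
  · refine le_trans ?_ h3
    rw [le_abs]
    left; linarith
  · refine le_trans ?_ h3
    rw [le_abs]
    right; linarith

open scoped Classical in
theorem master (a : ι → ℝ) (m : ℕ) (hm : m + 1 ≤ Fintype.card ι)
    (c : ℝ) {R : ℝ} (hR : 0 < R)
    (hsep : ∀ p, |a p - c| + 2⁻¹ ≤ R ∨ R + 2⁻¹ ≤ |a p - c|) :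
    Filter.Tendsto (fun b : ι → ℝ => ∑ p ∈ univ.filter (fun p => |a p - c| < R),
        b p ^ m / ∏ q ∈ univ.erase p, (b p - b q))
      (nhdsWithin a {b | Function.Injective b})
      (nhds (((2 * ↑π * I)⁻¹ * ∮ z in C((c:ℂ), R), z ^ m / ∏ q, (z - (a q : ℂ))).re)) := by
  set F := nhdsWithin a {b : ι → ℝ | Function.Injective b} with hF
  -- eventually, b is injective and uniformly 1/4-close to a
  have hnear : ∀ᶠ b in F, Function.Injective b ∧ ∀ q, |b q - a q| < 4⁻¹ := by
    have h1 : ∀ᶠ b in F, Function.Injective b := eventually_mem_nhdsWithin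
    have h2 : ∀ᶠ b : ι → ℝ in F, dist b a < 4⁻¹ :=
      eventually_nhdsWithin_of_eventually_nhds
        (Metric.eventually_nhds_iff_ball.2 ⟨4⁻¹, by norm_num, fun y hy => mem_ball.mp hy⟩)
    filter_upwards [h1, h2] with b hb1 hb2
    refine ⟨hb1, fun q => ?_⟩
    calc |b q - a q| = dist (b q) (a q) := (Real.dist_eq _ _).symm
      _ ≤ dist b a := dist_le_pi_dist b a q
      _ < 4⁻¹ := hb2
  -- lower bound for |z - b q| on the sphere
  have hlb : ∀ b : ι → ℝ, (∀ q, |b q - a q| < 4⁻¹) → ∀ (θ : ℝ) (q : ι),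
      4⁻¹ ≤ ‖circleMap (c : ℂ) R θ - (b q : ℂ)‖ := by
    intro b hb θ q
    have h1 := sphere_lb hR hsep θ q
    have h2 : ‖((a q : ℂ)) - (b q : ℂ)‖ < 4⁻¹ := by
      rw [← ofReal_sub, Complex.norm_real, Real.norm_eq_abs, abs_sub_comm]; exact hb q
    calc (4 : ℝ)⁻¹ = 2⁻¹ - 4⁻¹ := by norm_num
      _ ≤ ‖circleMap (c : ℂ) R θ - (a q : ℂ)‖ - ‖((a q : ℂ)) - (b q : ℂ)‖ := by
          refine sub_le_sub h1 h2.le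
      _ ≤ ‖circleMap (c : ℂ) R θ - (b q : ℂ)‖ := by
          have := norm_sub_le (circleMap (c : ℂ) R θ - (b q : ℂ)) (((a q : ℂ)) - (b q : ℂ))
          have heq : (circleMap (c : ℂ) R θ - (b q : ℂ)) - (((a q : ℂ)) - (b q : ℂ))
              = circleMap (c : ℂ) R θ - (a q : ℂ) := by ring
          rw [heq] at this
          linarith [this]
  -- membership in ball is governed by the limit configuration
  have hmem : ∀ b : ι → ℝ, (∀ q, |b q - a q| < 4⁻¹) → ∀ p,
      (((b p : ℝ) : ℂ) ∈ ball (c:ℂ) R ↔ |a p - c| < R) := by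
    intro b hb p
    have hd : dist ((b p : ℝ) : ℂ) ((c : ℝ) : ℂ) = |b p - c| := by
      rw [Complex.dist_eq, ← ofReal_sub, Complex.norm_real, Real.norm_eq_abs]
    have t1 : |b p - c| ≤ |b p - a p| + |a p - c| := abs_sub_le _ _ _
    have t2 : |a p - c| ≤ |a p - b p| + |b p - c| := abs_sub_le _ _ _
    rw [mem_ball, hd]
    have hb1 := hb p
    rw [abs_sub_comm (a p) (b p)] at t2
    rcases hsep p with h | h
    · constructor
      · intro _; linarith
      · intro _; linarith
    · constructor
      · intro hlt; linarith
      · intro hlt; linarith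
  have hoffb : ∀ b : ι → ℝ, (∀ q, |b q - a q| < 4⁻¹) → ∀ p,
      ((b p : ℝ) : ℂ) ∉ sphere (c:ℂ) R := by
    intro b hb p hp
    have hd : dist ((b p : ℝ) : ℂ) ((c : ℝ) : ℂ) = |b p - c| := by
      rw [Complex.dist_eq, ← ofReal_sub, Complex.norm_real, Real.norm_eq_abs]
    rw [mem_sphere, hd] at hp
    have t1 : |b p - c| ≤ |b p - a p| + |a p - c| := abs_sub_le _ _ _
    have t2 : |a p - c| ≤ |a p - b p| + |b p - c| := abs_sub_le _ _ _
    rw [abs_sub_comm (a p) (b p)] at t2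
    have hb1 := hb p
    rcases hsep p with h | h
    · linarith
    · linarith
  -- Step 1 : eventual equality with the contour integral
  have hev : ∀ᶠ b in F, (∑ p ∈ univ.filter (fun p => |a p - c| < R),
      b p ^ m / ∏ q ∈ univ.erase p, (b p - b q))
      = ((2 * ↑π * I)⁻¹ * ∮ z in C((c:ℂ), R), z ^ m / ∏ q, (z - ((b q : ℝ) : ℂ))).re := by
    filter_upwards [hnear] with b hb
    obtain ⟨hinj, hcl⟩ := hb
    have hvinj : Function.Injective (fun q : ι => ((b q : ℝ) : ℂ)) := fun p q h =>
      hinj (Complex.ofReal_inj.mp h)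
    rw [circleIntegral_ratfun _ hvinj m hm _ hR (hoffb b hcl), ← mul_assoc,
      inv_mul_cancel₀ two_pi_I_ne_zero, one_mul]
    rw [Finset.filter_congr (fun p _ => by
      simpa using (hmem b hcl p)
      : ∀ p ∈ (univ : Finset ι), (((b p : ℝ) : ℂ) ∈ ball (c:ℂ) R) ↔ (|a p - c| < R))]
    rw [show (∑ p ∈ univ.filter (fun p => |a p - c| < R),
        ((b p : ℝ) : ℂ) ^ m / ∏ q ∈ univ.erase p, (((b p : ℝ) : ℂ) - ((b q : ℝ) : ℂ)))
        = ((∑ p ∈ univ.filter (fun p => |a p - c| < R),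
          b p ^ m / ∏ q ∈ univ.erase p, (b p - b q) : ℝ) : ℂ) from by push_cast; rfl]
    rw [ofReal_re]
  -- Step 2 : convergence of the contour integral
  have hI : Tendsto (fun b : ι → ℝ => ∮ z in C((c:ℂ), R), z ^ m / ∏ q, (z - ((b q : ℝ) : ℂ)))
      F (nhds (∮ z in C((c:ℂ), R), z ^ m / ∏ q, (z - ((a q : ℝ) : ℂ)))) := by
    simp only [circleIntegral]
    refine intervalIntegral.tendsto_integral_filter_of_dominated_convergence
      (fun _ => R * ((‖(c:ℂ)‖ + R) ^ m * 4 ^ (Fintype.card ι))) ?_ ?_ ?_ ?_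
    · -- measurability
      filter_upwards [hnear] with b hb
      have hcont : Continuous fun θ : ℝ => deriv (circleMap (c:ℂ) R) θ •
          ((circleMap (c:ℂ) R θ) ^ m / ∏ q, (circleMap (c:ℂ) R θ - ((b q : ℝ) : ℂ))) := by
        simp only [deriv_circleMap]
        refine ((continuous_circleMap 0 R).mul continuous_const).smul
          (Continuous.div ((continuous_circleMap _ _).pow m)
            (continuous_finset_prod _ fun q _ => (continuous_circleMap _ _).sub continuous_const)
            fun θ => ?_)
        refine Finset.prod_ne_zero_iff.2 fun q _ => fun h0 => ?_
        have := hlb b hb.2 θ q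
        rw [h0, norm_zero] at this
        norm_num at this
      exact hcont.aestronglyMeasurable
    · -- uniform bound
      filter_upwards [hnear] with b hb
      refine MeasureTheory.ae_of_all _ fun θ _ => ?_
      rw [norm_smul, deriv_circleMap]
      have h1 : ‖circleMap 0 R θ * I‖ = R := by
        rw [norm_mul, norm_circleMap_zero, Complex.norm_I, mul_one, abs_of_pos hR]
      rw [h1]
      refine mul_le_mul_of_nonneg_left ?_ hR.le
      rw [norm_div, norm_pow, norm_prod]
      have hnum : ‖circleMap (c:ℂ) R θ‖ ^ m ≤ (‖(c:ℂ)‖ + R) ^ m := by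
        refine pow_le_pow_left₀ (norm_nonneg _) ?_ m
        have heq : (c:ℂ) + (circleMap (c:ℂ) R θ - (c:ℂ)) = circleMap (c:ℂ) R θ := by ring
        have h3 := norm_add_le (c:ℂ) (circleMap (c:ℂ) R θ - (c:ℂ))
        rw [heq] at h3
        have h4 : ‖circleMap (c:ℂ) R θ - (c:ℂ)‖ = R := by
          rw [circleMap_sub_center, norm_circleMap_zero, abs_of_pos hR]
        rw [h4] at h3
        simpa using h3
      have hden : ((4:ℝ)⁻¹) ^ (Fintype.card ι) ≤ ∏ q, ‖circleMap (c:ℂ) R θ - ((b q : ℝ) : ℂ)‖ := by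
        rw [← Finset.card_univ, ← Finset.prod_const]
        exact Finset.prod_le_prod (fun q _ => by norm_num) (fun q _ => hlb b hb.2 θ q)
      have hdpos : (0:ℝ) < ((4:ℝ)⁻¹) ^ (Fintype.card ι) := by positivity
      calc ‖circleMap (c:ℂ) R θ‖ ^ m / ∏ q, ‖circleMap (c:ℂ) R θ - ((b q : ℝ) : ℂ)‖
          ≤ (‖(c:ℂ)‖ + R) ^ m / ((4:ℝ)⁻¹) ^ (Fintype.card ι) :=
            div_le_div₀ (by positivity) hnum hdpos hden
        _ = (‖(c:ℂ)‖ + R) ^ m * 4 ^ (Fintype.card ι) := by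
            rw [inv_pow, div_eq_mul_inv, inv_inv]
        _ ≤ _ := le_rfl
    · exact intervalIntegrable_const
    · -- pointwise convergence
      refine MeasureTheory.ae_of_all _ fun θ _ => ?_
      have hprod : Tendsto (fun b : ι → ℝ => ∏ q, (circleMap (c:ℂ) R θ - ((b q : ℝ) : ℂ))) F
          (nhds (∏ q, (circleMap (c:ℂ) R θ - ((a q : ℝ) : ℂ)))) := by
        refine Tendsto.mono_left (Continuous.tendsto ?_ a) nhdsWithin_le_nhds
        exact continuous_finset_prod _ fun q _ =>
          continuous_const.sub (Complex.continuous_ofReal.comp (continuous_apply q))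
      have hne : (∏ q, (circleMap (c:ℂ) R θ - ((a q : ℝ) : ℂ))) ≠ 0 := by
        refine Finset.prod_ne_zero_iff.2 fun q _ => fun h0 => ?_
        have := sphere_lb hR hsep θ q
        rw [h0, norm_zero] at this
        norm_num at this
      exact tendsto_const_nhds.smul (Tendsto.div tendsto_const_nhds hprod hne)
  have hre : Tendsto (fun b : ι → ℝ =>
      ((2 * ↑π * I)⁻¹ * ∮ z in C((c:ℂ), R), z ^ m / ∏ q, (z - ((b q : ℝ) : ℂ))).re) F
      (nhds (((2 * ↑π * I)⁻¹ * ∮ z in C((c:ℂ), R), z ^ m / ∏ q, (z - ((a q : ℝ) : ℂ))).re)) :=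
    (Complex.continuous_re.tendsto _).comp (tendsto_const_nhds.mul hI)
  exact hre.congr' (hev.mono fun b hb => hb.symm)

open scoped Classical in
theorem nhdsWithin_inj_neBot (a : ι → ℝ) :
    (nhdsWithin a {b : ι → ℝ | Function.Injective b}).NeBot := by
  refine mem_closure_iff_nhdsWithin_neBot.mp ?_
  rw [Metric.mem_closure_iff]
  intro ε hε
  set n : ℕ := Fintype.card ι with hn
  set e : ι ≃ Fin n := Fintype.equivFin ι with he
  -- a positive lower bound for distinct values of `a`, capped by ε
  set s : Finset ℝ := ((univ : Finset (ι × ι)).filter (fun pq => a pq.1 ≠ a pq.2)).image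
    (fun pq => |a pq.1 - a pq.2|) with hs
  have hspos : ∀ x ∈ s, 0 < x := by
    intro x hx
    simp only [hs, Finset.mem_image, Finset.mem_filter] at hx
    obtain ⟨pq, ⟨-, hne⟩, rfl⟩ := hx
    exact abs_pos.mpr (sub_ne_zero.2 hne)
  set γ : ℝ := if h : s.Nonempty then min ε (s.min' h) else ε with hγ
  have hγpos : 0 < γ := by
    rw [hγ]
    split
    · exact lt_min hε (hspos _ (Finset.min'_mem _ _))
    · exact hε
  have hγε : γ ≤ ε := by
    rw [hγ]; split
    · exact min_le_left _ _
    · exact le_rfl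
  have hγs : ∀ p q : ι, a p ≠ a q → γ ≤ |a p - a q| := by
    intro p q hne
    have hmem : |a p - a q| ∈ s := by
      simp only [hs, Finset.mem_image, Finset.mem_filter]
      exact ⟨(p, q), ⟨Finset.mem_univ _, hne⟩, rfl⟩
    have hsn : s.Nonempty := ⟨_, hmem⟩
    rw [hγ, dif_pos hsn]
    exact le_trans (min_le_right _ _) (Finset.min'_le _ _ hmem)
  -- the perturbation
  set δ : ℝ := γ / (2 * (n + 1)) with hδ
  have hδpos : 0 < δ := by positivity
  set b : ι → ℝ := fun p => a p + δ * ((e p : ℕ) + 1) with hb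
  have hδn : ∀ p : ι, δ * ((e p : ℕ) + 1) ≤ γ / 2 := by
    intro p
    have h1 : ((e p : ℕ) : ℝ) + 1 ≤ (n : ℝ) := by
      have := (e p).isLt
      exact_mod_cast this
    calc δ * ((e p : ℕ) + 1) ≤ δ * n := by
          refine mul_le_mul_of_nonneg_left h1 hδpos.le
      _ ≤ γ / 2 := by
          rw [hδ, div_mul_eq_mul_div, div_le_div_iff₀ (by positivity) (by norm_num)]
          nlinarith [hγpos, (Nat.cast_nonneg n : (0:ℝ) ≤ n)]
  refine ⟨b, ?_, ?_⟩
  · -- injectivity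
    intro p q hpq
    simp only [hb] at hpq
    by_cases hA : a p = a q
    · have : δ * ((e p : ℕ) + 1) = δ * ((e q : ℕ) + 1) := by linarith [hpq, hA]
      have h2' := mul_left_cancel₀ hδpos.ne' this
      have h2 : ((e p : ℕ) : ℝ) = (e q : ℕ) := by linarith
      have : e p = e q := Fin.ext (by exact_mod_cast h2)
      exact e.injective this
    · exfalso
      have h3 : a p - a q = δ * ((e q : ℕ) + 1) - δ * ((e p : ℕ) + 1) := by linarith
      have hx := hδn p
      have hy := hδn q
      have hx0 : 0 ≤ δ * ((e p : ℕ) + 1) := by positivity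
      have hy0 : 0 ≤ δ * ((e q : ℕ) + 1) := by positivity
      have h4 : |a p - a q| ≤ γ / 2 := by
        rw [h3, abs_sub_le_iff]
        constructor <;> linarith
      have := hγs p q hA
      linarith
  · -- distance
    rw [dist_comm, dist_pi_lt_iff hε]
    intro p
    rw [Real.dist_eq, hb]
    have : |a p + δ * ((e p : ℕ) + 1) - a p| = δ * ((e p : ℕ) + 1) := by
      rw [show a p + δ * ((e p : ℕ) + 1) - a p = δ * ((e p : ℕ) + 1) by ring]
      exact abs_of_pos (by positivity)
    rw [this]
    calc δ * ((e p : ℕ) + 1) ≤ γ / 2 := hδn p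
      _ < γ := by linarith
      _ ≤ ε := hγε

open scoped Classical in
theorem circleIntegral_zero_holo (a : ι → ℝ) (m : ℕ)
    (hcard : (univ.filter (fun p => a p = 0)).card ≤ m)
    (hfar : ∀ p, a p = 0 ∨ 1 ≤ |a p|) :
    (∮ z in C((0:ℂ), 2⁻¹), z ^ m / ∏ q, (z - (a q : ℂ))) = 0 := by
  set m₀ := (univ.filter (fun p => a p = 0)).card with hm₀
  set g : ℂ → ℂ := fun z =>
    z ^ (m - m₀) / ∏ q ∈ univ.filter (fun p => ¬ a p = 0), (z - (a q : ℂ)) with hg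
  have hne : ∀ z : ℂ, ‖z‖ ≤ 2⁻¹ →
      ∀ q ∈ univ.filter (fun p : ι => ¬ a p = 0), z - (a q : ℂ) ≠ 0 := by
    intro z hz q hq h0
    rw [Finset.mem_filter] at hq
    rcases hfar q with h | h
    · exact hq.2 h
    · have : z = (a q : ℂ) := by linear_combination h0
      rw [this, Complex.norm_real, Real.norm_eq_abs] at hz
      linarith
  have hdiff : ∀ z ∈ closedBall (0:ℂ) 2⁻¹, DifferentiableAt ℂ g z := by
    intro z hz
    rw [mem_closedBall, Complex.dist_eq, sub_zero] at hz
    refine DifferentiableAt.div (differentiableAt_pow _)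
      (DifferentiableAt.fun_finsetProd fun q _ => (differentiableAt_id.sub_const _)) ?_
    exact Finset.prod_ne_zero_iff.2 (hne z hz)
  have hsphere : Set.EqOn (fun z : ℂ => z ^ m / ∏ q, (z - (a q : ℂ))) g (sphere (0:ℂ) 2⁻¹) := by
    intro z hz
    rw [mem_sphere, Complex.dist_eq, sub_zero] at hz
    have hz0 : z ≠ 0 := by
      intro h0; rw [h0, norm_zero] at hz; norm_num at hz
    have h1 : ∏ q ∈ univ.filter (fun p : ι => a p = 0), (z - (a q : ℂ)) = z ^ m₀ := by
      rw [hm₀, ← Finset.prod_const]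
      refine Finset.prod_congr rfl fun q hq => ?_
      rw [Finset.mem_filter] at hq
      rw [hq.2]; simp
    show z ^ m / ∏ q, (z - (a q : ℂ)) = g z
    rw [hg]
    rw [← Finset.prod_filter_mul_prod_filter_not univ (fun p => a p = 0), h1,
      show z ^ m = z ^ m₀ * z ^ (m - m₀) from by rw [← pow_add, Nat.add_sub_cancel' hcard],
      mul_div_mul_left _ _ (pow_ne_zero _ hz0)]
  calc (∮ z in C((0:ℂ), 2⁻¹), z ^ m / ∏ q, (z - (a q : ℂ)))
      = ∮ z in C((0:ℂ), 2⁻¹), g z := circleIntegral.integral_congr (by norm_num) hsphere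
    _ = 0 := by
        refine circleIntegral_eq_zero_of_differentiable_on_off_countable (by norm_num)
          Set.countable_empty (fun z hz => (hdiff z hz).continuousAt.continuousWithinAt)
          (fun z hz => hdiff z (ball_subset_closedBall hz.1))

theorem term_neg_comp (b : ι → ℝ) (σ : ι → ι) (hσ : Function.Involutive σ) (m : ℕ)
    (hpar : (-1 : ℝ) ^ m = (-1) ^ (Fintype.card ι - 1)) (p : ι) :
    (-(b (σ p))) ^ m / ∏ q ∈ univ.erase p, (-(b (σ p)) - -(b (σ q)))
      = b (σ p) ^ m / ∏ q ∈ univ.erase (σ p), (b (σ p) - b q) := by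
  have h1 : ∏ q ∈ univ.erase p, (-(b (σ p)) - -(b (σ q)))
      = ∏ q ∈ univ.erase p, (-1) * (b (σ p) - b (σ q)) :=
    Finset.prod_congr rfl fun q _ => by ring
  have h2 : ∏ q ∈ univ.erase p, (b (σ p) - b (σ q))
      = ∏ q ∈ univ.erase (σ p), (b (σ p) - b q) := by
    refine Finset.prod_nbij' σ σ ?_ ?_ ?_ ?_ ?_
    · intro q hq
      rw [Finset.mem_erase] at hq ⊢
      exact ⟨fun h => hq.1 (hσ.injective h), Finset.mem_univ _⟩
    · intro q hq
      rw [Finset.mem_erase] at hq ⊢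
      refine ⟨fun h => hq.1 ?_, Finset.mem_univ _⟩
      rw [← h, hσ q]
    · intro q _; exact hσ q
    · intro q _; exact hσ q
    · intro q _; rfl
  rw [h1, Finset.prod_mul_distrib, Finset.prod_const,
    Finset.card_erase_of_mem (Finset.mem_univ p), Finset.card_univ, h2, neg_pow, hpar,
    mul_div_mul_left _ _ (pow_ne_zero _ (by norm_num : (-1:ℝ) ≠ 0))]
end SL2Aux
end SL2AuxSection

noncomputable section

open SL2Aux

/-- The weight `a_{k,i} = 2 i - d k` attached to `(k,i) ∈ Θ`. -/
def aVal (r : ℕ) (d : Fin r → ℕ) (p : Σ k : Fin r, Fin (d k + 1)) : ℤ :=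
  2 * ((p.2 : ℕ) : ℤ) - (d p.1 : ℤ)

/-- The index set `Λ ⊆ Θ` of positive weights. -/
abbrev lamType (r : ℕ) (d : Fin r → ℕ) : Type :=
  {p : Σ k : Fin r, Fin (d k + 1) // 0 < aVal r d p}

/-- `C = |Λ|`. -/
def cardC (r : ℕ) (d : Fin r → ℕ) : ℕ := Fintype.card (lamType r d)

/-- The tuple `a = (a_{k,i} : (k,i) ∈ Λ)`. -/
def aTuple (r : ℕ) (d : Fin r → ℕ) (q : lamType r d) : ℝ := ((aVal r d q.1 : ℤ) : ℝ)

theorem sl2_invariants_first_coeff_vanish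
    (r : ℕ) (d : Fin r → ℕ) (hd : ∀ k, 1 ≤ d k)
    (hneV1 : Multiset.map d Finset.univ.val ≠ ({1} : Multiset ℕ))
    (hneV2 : Multiset.map d Finset.univ.val ≠ ({2} : Multiset ℕ))
    (hne2V1 : Multiset.map d Finset.univ.val ≠ ({1, 1} : Multiset ℕ)) :
    Filter.Tendsto
      (fun b : (Σ k : Fin r, Fin (d k + 1)) → ℝ =>
        ∑ p : lamType r d,
          2 * b p.1 ^ ((r + ∑ k, d k) - 3) /
            ∏ q ∈ Finset.univ.erase p.1, (b p.1 - b q))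
      (nhdsWithin (fun p => ((aVal r d p : ℤ) : ℝ)) {b | Function.Injective b})
      (nhds 0) := by
  classical
  rcases Nat.eq_zero_or_pos r with hr0 | hr
  · subst hr0
    have hE : IsEmpty (lamType 0 d) := ⟨fun p => p.1.1.elim0⟩
    have hfun : (fun b : (Σ k : Fin 0, Fin (d k + 1)) → ℝ =>
        ∑ p : lamType 0 d, 2 * b p.1 ^ ((0 + ∑ k, d k) - 3) /
          ∏ q ∈ Finset.univ.erase p.1, (b p.1 - b q)) = fun _ => (0:ℝ) := by
      funext b
      rw [Finset.univ_eq_empty, Finset.sum_empty]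
    rw [hfun]
    exact tendsto_const_nhds
  -- nontrivial case
  set a : (Σ k : Fin r, Fin (d k + 1)) → ℝ := fun p => ((aVal r d p : ℤ) : ℝ) with ha
  set N := Fintype.card (Σ k : Fin r, Fin (d k + 1)) with hN
  have hcard : N = r + ∑ k, d k := by
    rw [hN, Fintype.card_sigma]
    simp only [Fintype.card_fin]
    rw [Finset.sum_add_distrib, Finset.sum_const, Finset.card_univ, Fintype.card_fin,
      smul_eq_mul, mul_one, add_comm]
  -- the total degree is at least 3
  have hsum3 : 3 ≤ ∑ k, d k := by
    by_contra hlt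
    push_neg at hlt
    have hrle : r ≤ ∑ k, d k := by
      calc r = ∑ _k : Fin r, 1 := by simp
        _ ≤ ∑ k, d k := Finset.sum_le_sum fun k _ => hd k
    have hr12 : r = 1 ∨ r = 2 := by omega
    rcases hr12 with h | h
    · subst h
      have hsum : ∑ k : Fin 1, d k = d 0 := by simp [Fin.sum_univ_one]
      have hmap : Multiset.map d Finset.univ.val = {d 0} := by
        have : (Finset.univ : Finset (Fin 1)).val = {(0 : Fin 1)} := rfl
        rw [this, Multiset.map_singleton]
      have hd0 : 1 ≤ d 0 := hd 0
      have : d 0 = 1 ∨ d 0 = 2 := by omega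
      rcases this with h1 | h1
      · exact hneV1 (by rw [hmap, h1])
      · exact hneV2 (by rw [hmap, h1])
    · subst h
      have hsum : ∑ k : Fin 2, d k = d 0 + d 1 := by simp [Fin.sum_univ_two]
      have h01 : d 0 = 1 ∧ d 1 = 1 := by
        have := hd 0; have := hd 1; omega
      have hmap : Multiset.map d Finset.univ.val = {d 0, d 1} := by
        have : (Finset.univ : Finset (Fin 2)).val = {(0 : Fin 2), (1 : Fin 2)} := rfl
        rw [this]
        rfl
      exact hne2V1 (by rw [hmap, h01.1, h01.2])
  have hN4 : 4 ≤ N := by omega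
  set m := N - 3 with hm
  have hm1 : m + 1 ≤ N := by omega
  have hm2 : m + 2 ≤ N := by omega
  -- integrality facts about weights
  have habs : ∀ p, a p = 0 ∨ 1 ≤ |a p| := by
    intro p
    rcases eq_or_ne (aVal r d p) 0 with h | h
    · left; rw [ha]; simp [h]
    · right
      have h1 : (1:ℤ) ≤ |aVal r d p| := Int.one_le_abs h
      have : ((1:ℤ):ℝ) ≤ ((|aVal r d p| : ℤ) : ℝ) := by exact_mod_cast h1
      rw [Int.cast_abs] at this
      simpa [ha] using this
  -- Γ₀ : the zero-weight cluster
  have hsep0 : ∀ p, |a p - 0| + 2⁻¹ ≤ 2⁻¹ ∨ (2⁻¹:ℝ) + 2⁻¹ ≤ |a p - 0| := by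
    intro p
    rcases habs p with h | h
    · left; rw [h]; norm_num
    · right; rw [sub_zero]; linarith
  have hZfil : (univ.filter (fun p => |a p - 0| < 2⁻¹))
      = (univ.filter (fun p => aVal r d p = 0)) := by
    refine Finset.filter_congr fun p _ => ?_
    rcases habs p with h | h
    · constructor
      · intro _
        have : ((aVal r d p : ℤ) : ℝ) = 0 := h
        exact_mod_cast this
      · intro _; rw [h]; norm_num
    · constructor
      · intro hlt; rw [sub_zero] at hlt; linarith
      · intro h0
        exfalso
        have : a p = 0 := by rw [ha]; simp [h0]
        rw [this] at h; norm_num at h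
  -- the zero-weight cluster has at most r elements
  have hZcard : (univ.filter (fun p => a p = 0)).card ≤ r := by
    have hinj : Set.InjOn (fun p : (Σ k : Fin r, Fin (d k + 1)) => p.1)
        (univ.filter (fun p => a p = 0)) := by
      intro p hp q hq hfst
      rw [Finset.coe_filter] at hp hq
      obtain ⟨-, hp2⟩ := hp
      obtain ⟨-, hq2⟩ := hq
      rcases p with ⟨k, i⟩; rcases q with ⟨k', j⟩
      simp only at hfst
      subst hfst
      have hp3 : aVal r d ⟨k, i⟩ = 0 := by
        have h' := hp2
        simp only [ha, Int.cast_eq_zero] at h'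
        exact h'
      have hq3 : aVal r d ⟨k, j⟩ = 0 := by
        have h' := hq2
        simp only [ha, Int.cast_eq_zero] at h'
        exact h'
      simp only [aVal] at hp3 hq3
      have : (i : ℕ) = (j : ℕ) := by omega
      have : i = j := Fin.ext this
      rw [this]
    calc (univ.filter (fun p => a p = 0)).card
        ≤ (univ : Finset (Fin r)).card := Finset.card_le_card_of_injOn _ (fun p _ => Finset.mem_univ _) hinj
      _ = r := by rw [Finset.card_univ, Fintype.card_fin]
  have hZr : (univ.filter (fun p => a p = 0)).card ≤ m := by
    refine le_trans hZcard ?_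
    omega
  have hfil00 : (univ.filter (fun p => aVal r d p = 0)) = (univ.filter (fun p => a p = 0)) := by
    refine Finset.filter_congr fun p _ => ?_
    constructor
    · intro h0; rw [ha]; simp [h0]
    · intro h0
      have : ((aVal r d p : ℤ) : ℝ) = 0 := h0
      exact_mod_cast this
  have hZ0 : (((2 * ↑π * I)⁻¹ *
      ∮ z in C(((0:ℝ):ℂ), 2⁻¹), z ^ m / ∏ q, (z - (a q : ℂ))).re) = 0 := by
    rw [show ((0:ℝ):ℂ) = (0:ℂ) from by norm_num,
      circleIntegral_zero_holo a m hZr habs, mul_zero, Complex.zero_re]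
  have hZ : Tendsto (fun b : (Σ k : Fin r, Fin (d k + 1)) → ℝ =>
      ∑ p ∈ univ.filter (fun p => aVal r d p = 0),
        b p ^ m / ∏ q ∈ univ.erase p, (b p - b q))
      (nhdsWithin a {b | Function.Injective b}) (nhds 0) := by
    have h := master a m (by rw [← hN]; exact hm1) 0 (by norm_num : (0:ℝ) < 2⁻¹) hsep0
    rw [hZ0] at h
    refine h.congr fun b => ?_
    refine Finset.sum_congr ?_ fun p _ => rfl
    rw [← hZfil]
  -- Γ⁺ : the positive-weight contour
  set D : ℕ := Finset.univ.sup d with hD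
  have hD1 : 1 ≤ D := le_trans (hd ⟨0, hr⟩) (Finset.le_sup (Finset.mem_univ _))
  have hD1' : (1:ℝ) ≤ (D:ℝ) := by exact_mod_cast hD1
  set cc : ℝ := ((D:ℝ) + 1) / 2 with hcc
  set R : ℝ := (D:ℝ) / 2 with hRR
  have hRpos : (0:ℝ) < R := by rw [hRR]; linarith
  have hub : ∀ p, a p ≤ (D:ℝ) := by
    intro p
    have h1 : aVal r d p ≤ (d p.1 : ℤ) := by
      have := p.2.isLt
      simp only [aVal]
      omega
    have h2 : (d p.1 : ℤ) ≤ (D : ℤ) := by exact_mod_cast Finset.le_sup (Finset.mem_univ p.1)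
    have : ((aVal r d p : ℤ) : ℝ) ≤ ((D:ℤ):ℝ) := by exact_mod_cast le_trans h1 h2
    simpa [ha] using this
  have hgt : ∀ p, 0 < aVal r d p → |a p - cc| ≤ R - 2⁻¹ := by
    intro p hpos
    have h1 : (1:ℝ) ≤ a p := by
      have : (1:ℤ) ≤ aVal r d p := hpos
      have h2 : ((1:ℤ):ℝ) ≤ ((aVal r d p : ℤ):ℝ) := by exact_mod_cast this
      simpa [ha] using h2
    have h2 := hub p
    rw [abs_le]
    constructor
    · rw [hcc, hRR]; linarith
    · rw [hcc, hRR]; linarith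
  have hle : ∀ p, aVal r d p ≤ 0 → R + 2⁻¹ ≤ |a p - cc| := by
    intro p hneg
    have h1 : a p ≤ 0 := by
      have h2 : ((aVal r d p : ℤ):ℝ) ≤ ((0:ℤ):ℝ) := by exact_mod_cast hneg
      simpa [ha] using h2
    have h3 : |a p - cc| = cc - a p := by
      rw [abs_of_nonpos (by rw [hcc]; linarith)]
      ring
    rw [h3, hcc, hRR]
    linarith
  have hsepP : ∀ p, |a p - cc| + 2⁻¹ ≤ R ∨ R + 2⁻¹ ≤ |a p - cc| := by
    intro p
    rcases lt_or_ge 0 (aVal r d p) with h | h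
    · left; linarith [hgt p h]
    · right; exact hle p h
  have hPfil : (univ.filter (fun p => |a p - cc| < R))
      = (univ.filter (fun p => 0 < aVal r d p)) := by
    refine Finset.filter_congr fun p _ => ?_
    constructor
    · intro hlt
      by_contra hnp
      push_neg at hnp
      have := hle p hnp
      linarith
    · intro hpos
      have := hgt p hpos
      linarith
  set L : ℝ := (((2 * ↑π * I)⁻¹ *
      ∮ z in C((cc:ℂ), R), z ^ m / ∏ q, (z - (a q : ℂ))).re) with hL
  have hS : Tendsto (fun b : (Σ k : Fin r, Fin (d k + 1)) → ℝ =>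
      ∑ p ∈ univ.filter (fun p => 0 < aVal r d p),
        b p ^ m / ∏ q ∈ univ.erase p, (b p - b q))
      (nhdsWithin a {b | Function.Injective b}) (nhds L) := by
    have h := master a m (by rw [← hN]; exact hm1) cc hRpos hsepP
    refine h.congr fun b => ?_
    refine Finset.sum_congr ?_ fun p _ => rfl
    rw [← hPfil]
  -- the symmetry
  set σf : (Σ k : Fin r, Fin (d k + 1)) → (Σ k : Fin r, Fin (d k + 1)) :=
    fun p => ⟨p.1, p.2.rev⟩ with hσf
  have hσinv : Function.Involutive σf := by
    intro p; rcases p with ⟨k, i⟩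
    simp [hσf, Fin.rev_rev]
  have haσ : ∀ p, aVal r d (σf p) = - aVal r d p := by
    intro p; rcases p with ⟨k, i⟩
    simp only [hσf, aVal]
    have hlt := i.isLt
    have hval : ((Fin.rev i : Fin (d k + 1)) : ℕ) = d k - (i : ℕ) := by
      rw [Fin.val_rev]; omega
    rw [hval]
    have hile : (i : ℕ) ≤ d k := by omega
    push_cast [Nat.cast_sub hile]
    ring
  set T : ((Σ k : Fin r, Fin (d k + 1)) → ℝ) → ((Σ k : Fin r, Fin (d k + 1)) → ℝ) :=
    fun b p => - b (σf p) with hT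
  have hTa : T a = a := by
    funext p
    show -(a (σf p)) = a p
    have : a (σf p) = ((aVal r d (σf p) : ℤ) : ℝ) := rfl
    rw [this, haσ p]
    push_cast
    simp [ha]
  have hTt : Tendsto T (nhdsWithin a {b | Function.Injective b})
      (nhdsWithin a {b | Function.Injective b}) := by
    have hcont : ContinuousWithinAt T {b : (Σ k : Fin r, Fin (d k + 1)) → ℝ | Function.Injective b} a :=
      (Continuous.continuousWithinAt (continuous_pi fun p => (continuous_apply (σf p)).neg))
    have hmaps : Set.MapsTo T {b : (Σ k : Fin r, Fin (d k + 1)) → ℝ | Function.Injective b}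
        {b : (Σ k : Fin r, Fin (d k + 1)) → ℝ | Function.Injective b} := by
      intro b hb
      intro p q hpq
      have h1 : b (σf p) = b (σf q) := neg_injective hpq
      exact hσinv.injective (hb h1)
    have := hcont.tendsto_nhdsWithin hmaps
    rwa [hTa] at this
  have hparity : (-1:ℝ) ^ m = (-1) ^ (N - 1) := by
    rw [show N - 1 = m + 2 from by omega, pow_add]
    norm_num
  -- eventual identity from the symmetry and the residue sum
  have hsym : ∀ᶠ b in nhdsWithin a {b : (Σ k : Fin r, Fin (d k + 1)) → ℝ | Function.Injective b},
      ((fun b => ∑ p ∈ univ.filter (fun p => 0 < aVal r d p),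
        b p ^ m / ∏ q ∈ univ.erase p, (b p - b q)) ∘ T) b
      = -(∑ p ∈ univ.filter (fun p => 0 < aVal r d p),
          b p ^ m / ∏ q ∈ univ.erase p, (b p - b q))
        - (∑ p ∈ univ.filter (fun p => aVal r d p = 0),
          b p ^ m / ∏ q ∈ univ.erase p, (b p - b q)) := by
    filter_upwards [eventually_mem_nhdsWithin] with b hb
    have hbinj : Function.Injective b := hb
    have hterm : ∀ p, (T b) p ^ m / ∏ q ∈ univ.erase p, ((T b) p - (T b) q)
        = b (σf p) ^ m / ∏ q ∈ univ.erase (σf p), (b (σf p) - b q) :=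
      fun p => term_neg_comp b σf hσinv m (by rw [← hN]; exact hparity) p
    have hstep1 : ((fun b => ∑ p ∈ univ.filter (fun p => 0 < aVal r d p),
        b p ^ m / ∏ q ∈ univ.erase p, (b p - b q)) ∘ T) b
        = ∑ p ∈ univ.filter (fun p => aVal r d p < 0),
          b p ^ m / ∏ q ∈ univ.erase p, (b p - b q) := by
      show (∑ p ∈ univ.filter (fun p => 0 < aVal r d p),
        (T b) p ^ m / ∏ q ∈ univ.erase p, ((T b) p - (T b) q)) = _
      rw [Finset.sum_congr rfl (fun p _ => hterm p)]
      refine Finset.sum_nbij' σf σf ?_ ?_ ?_ ?_ ?_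
      · intro p hp
        rw [Finset.mem_filter] at hp ⊢
        exact ⟨Finset.mem_univ _, by rw [haσ p]; omega⟩
      · intro p hp
        rw [Finset.mem_filter] at hp ⊢
        exact ⟨Finset.mem_univ _, by have := haσ p; omega⟩
      · intro p _; exact hσinv p
      · intro p _; exact hσinv p
      · intro p _; rfl
    rw [hstep1]
    have h0 : ∑ p : (Σ k : Fin r, Fin (d k + 1)),
        b p ^ m / ∏ q ∈ univ.erase p, (b p - b q) = 0 :=
      sum_div_prod_eq_zero b hbinj m (by rw [← hN]; exact hm2)
    have h1 := Finset.sum_filter_add_sum_filter_not univ (fun p => 0 < aVal r d p)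
      (fun p => b p ^ m / ∏ q ∈ univ.erase p, (b p - b q))
    have h2 := Finset.sum_filter_add_sum_filter_not
      (univ.filter (fun p => ¬ 0 < aVal r d p)) (fun p => aVal r d p = 0)
      (fun p => b p ^ m / ∏ q ∈ univ.erase p, (b p - b q))
    have e1 : (univ.filter (fun p => ¬ 0 < aVal r d p)).filter (fun p => aVal r d p = 0)
        = univ.filter (fun p => aVal r d p = 0) := by
      rw [Finset.filter_filter]
      refine Finset.filter_congr fun p _ => ?_
      constructor
      · exact fun h => h.2
      · intro h; exact ⟨by omega, h⟩
    have e2 : (univ.filter (fun p => ¬ 0 < aVal r d p)).filter (fun p => ¬ aVal r d p = 0)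
        = univ.filter (fun p => aVal r d p < 0) := by
      rw [Finset.filter_filter]
      refine Finset.filter_congr fun p _ => ?_
      constructor
      · intro h; omega
      · intro h; exact ⟨by omega, by omega⟩
    rw [e1, e2] at h2
    rw [h0] at h1
    linarith
  -- conclude L = 0
  haveI : (nhdsWithin a {b : (Σ k : Fin r, Fin (d k + 1)) → ℝ | Function.Injective b}).NeBot :=
    nhdsWithin_inj_neBot a
  have hST : Tendsto ((fun b : (Σ k : Fin r, Fin (d k + 1)) → ℝ =>
      ∑ p ∈ univ.filter (fun p => 0 < aVal r d p),
        b p ^ m / ∏ q ∈ univ.erase p, (b p - b q)) ∘ T)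
      (nhdsWithin a {b | Function.Injective b}) (nhds L) := hS.comp hTt
  have hRHS : Tendsto (fun b : (Σ k : Fin r, Fin (d k + 1)) → ℝ =>
      -(∑ p ∈ univ.filter (fun p => 0 < aVal r d p),
          b p ^ m / ∏ q ∈ univ.erase p, (b p - b q))
        - (∑ p ∈ univ.filter (fun p => aVal r d p = 0),
          b p ^ m / ∏ q ∈ univ.erase p, (b p - b q)))
      (nhdsWithin a {b | Function.Injective b}) (nhds (-L - 0)) := hS.neg.sub hZ
  have hLeq : L = -L - 0 := tendsto_nhds_unique (hST.congr' hsym) hRHS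
  have hL0 : L = 0 := by linarith
  -- final rewriting of the statement
  have hmain : (fun b : (Σ k : Fin r, Fin (d k + 1)) → ℝ =>
      ∑ p : lamType r d, 2 * b p.1 ^ ((r + ∑ k, d k) - 3) /
        ∏ q ∈ Finset.univ.erase p.1, (b p.1 - b q))
      = fun b => 2 * ∑ p ∈ univ.filter (fun p => 0 < aVal r d p),
          b p ^ m / ∏ q ∈ univ.erase p, (b p - b q) := by
    funext b
    have h1 : ∑ p : lamType r d, 2 * b p.1 ^ ((r + ∑ k, d k) - 3) /
        ∏ q ∈ Finset.univ.erase p.1, (b p.1 - b q)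
        = ∑ p ∈ univ.filter (fun p => 0 < aVal r d p),
            2 * b p ^ m / ∏ q ∈ univ.erase p, (b p - b q) := by
      rw [show (r + ∑ k, d k) - 3 = m from by omega]
      exact (Finset.sum_subtype (p := fun p => 0 < aVal r d p)
        (univ.filter (fun p => 0 < aVal r d p))
        (fun p => by rw [Finset.mem_filter]; simp)
        (fun p => 2 * b p ^ m / ∏ q ∈ univ.erase p, (b p - b q))).symm
    rw [h1, Finset.mul_sum]
    exact Finset.sum_congr rfl fun p _ => mul_div_assoc _ _ _
  rw [hmain]
  have := hS.const_mul (2:ℝ)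
  rw [hL0, mul_zero] at this
  exact this

end
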